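/- For ν, μ ∈ P⁺ with μ = 2μ₀ + μ₁ and ν(h_j) ≥ 2 for some j ∈ [1,n], the polynomials p_ν^μ satisfy the recursion p_ν^μ = q^{(ω_j, ν−μ)} p_{ν−2ω_j}^{μ−2ω_j} + q^{(ν, α_j)−1} p_{ν−α_j}^μ, where p is extended by zero to arguments outside P⁺. -/

import Mathlib

open Finset

abbrev Wt (n : ℕ) := Fin n → ℤ

def omegaW (n : ℕ) (k : ℕ) : Wt n := fun i => if (i : ℕ) + 1 = k then 1 else 0

def alphaW (n : ℕ) (k : ℕ) : Wt n := fun i =>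
  if (i : ℕ) + 1 = k then 2 else if (i : ℕ) + 2 = k ∨ (i : ℕ) = k then -1 else 0

def coeffW (n : ℕ) (l : Wt n) (k : ℕ) : ℤ := ∑ i : Fin n, if (i : ℕ) + 1 = k then l i else 0

def IsDom (n : ℕ) (l : Wt n) : Prop := ∀ i, 0 ≤ l i

def IsDomOne (n : ℕ) (l : Wt n) : Prop := ∀ i, 0 ≤ l i ∧ l i ≤ 1

def InQplus (n : ℕ) (w : Wt n) : Prop :=
  ∃ c : ℕ → ℕ, w = ∑ k ∈ Finset.Icc 1 n, (c k : ℤ) • alphaW n k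

def InQ (n : ℕ) (w : Wt n) : Prop :=
  ∃ c : ℕ → ℤ, w = ∑ k ∈ Finset.Icc 1 n, c k • alphaW n k

noncomputable def formW (n : ℕ) (x y : Wt n) : ℚ :=
  ∑ i : Fin n, ∑ j : Fin n, (x i : ℚ) * (y j : ℚ) *
    ((((min i.val j.val : ℕ) : ℚ) + 1) * ((n : ℚ) + 1 - (((max i.val j.val : ℕ) : ℚ) + 1)) / ((n : ℚ) + 1))

noncomputable def qpow (r : ℚ) : RatFunc ℚ := if r.den = 1 then RatFunc.X ^ r.num else 0

noncomputable def qint (k : ℤ) : RatFunc ℚ := (1 - RatFunc.X ^ k) / (1 - RatFunc.X)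

noncomputable def qbinom (m r : ℤ) : RatFunc ℚ :=
  if 0 ≤ r ∧ r ≤ m then ∏ k ∈ Finset.range r.toNat, qint (m - (k : ℤ)) / qint ((k : ℤ) + 1) else 0

noncomputable def qbinomQ (m r : ℚ) : RatFunc ℚ :=
  if m.den = 1 ∧ r.den = 1 then qbinom m.num r.num else 0

open Classical in
noncomputable def pPoly (n : ℕ) (l m m0 m1 : Wt n) : RatFunc ℚ :=
  if IsDom n l ∧ IsDom n m0 ∧ IsDomOne n m1 ∧ m = 2 • m0 + m1 then
    qpow (formW n (l + m1) (l - m) / 2) *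
      ∏ j ∈ Finset.Icc 1 n,
        qbinomQ (formW n (l - m) (omegaW n j) + formW n m0 (alphaW n j))
          (formW n (l - m) (omegaW n j))
  else 0
noncomputable def Cfun (n : ℕ) (a b : ℤ) : ℚ :=
  (min a b + 1) * ((n : ℚ) + 1 - (max a b + 1)) / ((n : ℚ) + 1)

lemma formW_eq (n : ℕ) (x y : Wt n) :
    formW n x y = ∑ i : Fin n, (x i : ℚ) * ∑ k : Fin n, (y k : ℚ) * Cfun n i.val k.val := by
  unfold formW Cfun
  refine Finset.sum_congr rfl fun i _ => ?_
  rw [Finset.mul_sum]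
  refine Finset.sum_congr rfl fun k _ => ?_
  push_cast
  ring

lemma cartan (n : ℕ) (a b : ℤ) (ha0 : 0 ≤ a) (ha : a ≤ (n:ℤ) - 1) (hb0 : 0 ≤ b) (hb : b ≤ (n:ℤ) - 1) :
    2 * Cfun n a b - Cfun n a (b-1) - Cfun n a (b+1) = if a = b then 1 else 0 := by
  have hn : (n : ℚ) + 1 ≠ 0 := by positivity
  rcases lt_trichotomy a b with h | h | h
  · rw [if_neg (by omega)]
    rw [Cfun, Cfun, Cfun, min_eq_left (by omega), min_eq_left (by omega), min_eq_left (by omega),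
      max_eq_right (by omega), max_eq_right (by omega), max_eq_right (by omega)]
    field_simp
    push_cast
    ring
  · subst h
    rw [if_pos rfl]
    rw [Cfun, Cfun, Cfun, min_eq_left (le_refl a), min_eq_right (by omega), min_eq_left (by omega),
      max_eq_left (le_refl a), max_eq_left (by omega), max_eq_right (by omega)]
    field_simp
    push_cast
    ring
  · rw [if_neg (by omega)]
    rw [Cfun, Cfun, Cfun, min_eq_right (by omega), min_eq_right (by omega), min_eq_right (by omega),
      max_eq_left (by omega), max_eq_left (by omega), max_eq_left (by omega)]
    field_simp
    push_cast
    ring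
lemma Cfun_neg (n : ℕ) (a : ℤ) (ha : 0 ≤ a) : Cfun n a (-1) = 0 := by
  rw [Cfun, min_eq_right (by omega)]
  norm_num

lemma Cfun_top (n : ℕ) (a : ℤ) (ha : a ≤ n) : Cfun n a n = 0 := by
  rw [Cfun, max_eq_right (by omega)]
  push_cast
  ring

lemma omega_collapse (n : ℕ) (i : Fin n) (m : ℕ) (hm : m ≤ n + 1) :
    ∑ k : Fin n, ((omegaW n m k : ℤ) : ℚ) * Cfun n i.val k.val = Cfun n i.val ((m:ℤ) - 1) := by
  rcases Nat.eq_zero_or_pos m with hm0 | hm1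
  · subst hm0
    simp only [omegaW]
    norm_num
    exact (Cfun_neg n i.val (by positivity)).symm
  rcases Nat.lt_or_ge m (n+1) with hmn | hmn
  · have hmem : (⟨m - 1, by omega⟩ : Fin n) ∈ Finset.univ := Finset.mem_univ _
    rw [Finset.sum_eq_single (⟨m - 1, by omega⟩ : Fin n)]
    · simp only [omegaW]
      rw [if_pos (by omega)]
      push_cast [Nat.cast_sub hm1]
      norm_num
    · intro k _ hk
      simp only [omegaW]
      rw [if_neg (by
        intro h
        apply hk
        apply Fin.ext
        simp
        omega)]
      norm_num
    · intro h; exact absurd hmem h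
  · have hm' : m = n + 1 := by omega
    subst hm'
    have : ∀ k : Fin n, ((omegaW n (n+1) k : ℤ) : ℚ) * Cfun n i.val k.val = 0 := by
      intro k
      simp only [omegaW]
      rw [if_neg (by omega)]
      norm_num
    rw [Finset.sum_congr rfl fun k _ => this k, Finset.sum_const, smul_zero]
    have : ((n:ℤ) + 1 - 1 : ℤ) = (n:ℤ) := by ring
    push_cast
    rw [this, Cfun_top n i.val (by exact_mod_cast le_of_lt (by exact_mod_cast i.isLt))]

lemma alpha_eq (n : ℕ) (j : ℕ) (hj : 1 ≤ j) (k : Fin n) :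
    alphaW n j k = 2 * omegaW n j k - omegaW n (j-1) k - omegaW n (j+1) k := by
  simp only [alphaW, omegaW]
  split_ifs <;> omega


lemma coeffW_eq (n : ℕ) (l : Wt n) (k : ℕ) (i : Fin n) (hi : (i : ℕ) + 1 = k) :
    coeffW n l k = l i := by
  rw [coeffW, Finset.sum_eq_single i]
  · rw [if_pos hi]
  · intro b _ hb
    rw [if_neg (fun h => hb (Fin.ext (by omega)))]
  · intro h; exact absurd (Finset.mem_univ _) h

lemma formW_alpha (n : ℕ) (x : Wt n) (j : ℕ) (hj1 : 1 ≤ j) (hjn : j ≤ n)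
    (i0 : Fin n) (hi0 : (i0 : ℕ) + 1 = j) :
    formW n x (alphaW n j) = (x i0 : ℚ) := by
  rw [formW_eq]
  have inner : ∀ i : Fin n, (∑ k : Fin n, ((alphaW n j k : ℤ) : ℚ) * Cfun n i.val k.val)
      = if (i.val : ℤ) = (j:ℤ) - 1 then 1 else 0 := by
    intro i
    have expand : ∀ k : Fin n, ((alphaW n j k : ℤ) : ℚ) * Cfun n i.val k.val
        = 2 * (((omegaW n j k : ℤ)):ℚ) * Cfun n i.val k.val
          - ((omegaW n (j-1) k : ℤ):ℚ) * Cfun n i.val k.val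
          - ((omegaW n (j+1) k : ℤ):ℚ) * Cfun n i.val k.val := by
      intro k
      rw [alpha_eq n j hj1 k]
      push_cast
      ring
    rw [Finset.sum_congr rfl fun k _ => expand k]
    rw [Finset.sum_sub_distrib, Finset.sum_sub_distrib]
    have h1 : ∑ k : Fin n, 2 * (((omegaW n j k : ℤ)):ℚ) * Cfun n i.val k.val
        = 2 * Cfun n i.val ((j:ℤ) - 1) := by
      rw [← omega_collapse n i j (by omega), Finset.mul_sum]
      exact Finset.sum_congr rfl fun k _ => by ring
    have h2 := omega_collapse n i (j-1) (by omega)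
    have h3 := omega_collapse n i (j+1) (by omega)
    rw [h1, h2, h3]
    have e2 : ((j-1 : ℕ) : ℤ) - 1 = ((j:ℤ) - 1) - 1 := by omega
    have e3 : ((j+1 : ℕ) : ℤ) - 1 = ((j:ℤ) - 1) + 1 := by omega
    rw [e2, e3]
    rw [cartan n i.val ((j:ℤ)-1) (by positivity) (by omega) (by omega) (by omega)]
  rw [Finset.sum_congr rfl fun i _ => by rw [inner i]]
  rw [Finset.sum_eq_single i0]
  · rw [if_pos (by omega)]
    ring
  · intro b _ hb
    rw [if_neg (fun h => hb (Fin.ext (by omega))), mul_zero]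
  · intro h; exact absurd (Finset.mem_univ _) h
lemma formW_sub_left (n : ℕ) (x y z : Wt n) :
    formW n (x - y) z = formW n x z - formW n y z := by
  unfold formW
  rw [← Finset.sum_sub_distrib]
  refine Finset.sum_congr rfl fun i _ => ?_
  rw [← Finset.sum_sub_distrib]
  refine Finset.sum_congr rfl fun k _ => ?_
  simp only [Pi.sub_apply]
  push_cast
  ring

lemma formW_add_left (n : ℕ) (x y z : Wt n) :
    formW n (x + y) z = formW n x z + formW n y z := by
  unfold formW
  rw [← Finset.sum_add_distrib]
  refine Finset.sum_congr rfl fun i _ => ?_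
  rw [← Finset.sum_add_distrib]
  refine Finset.sum_congr rfl fun k _ => ?_
  simp only [Pi.add_apply]
  push_cast
  ring

lemma formW_comm (n : ℕ) (x y : Wt n) : formW n x y = formW n y x := by
  unfold formW
  rw [Finset.sum_comm]
  refine Finset.sum_congr rfl fun i _ => Finset.sum_congr rfl fun k _ => ?_
  rw [min_comm, max_comm]
  ring

lemma formW_sub_right (n : ℕ) (x y z : Wt n) :
    formW n x (y - z) = formW n x y - formW n x z := by
  rw [formW_comm, formW_sub_left, formW_comm n y x, formW_comm n z x]

lemma formW_add_right (n : ℕ) (x y z : Wt n) :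
    formW n x (y + z) = formW n x y + formW n x z := by
  rw [formW_comm, formW_add_left, formW_comm n y x, formW_comm n z x]

lemma two_smul_wt (n : ℕ) (x : Wt n) : (2 : ℕ) • x = x + x := two_smul ℕ x

lemma formW_omega_oob (n : ℕ) (x : Wt n) (t : ℕ) (h : t = 0 ∨ t = n+1) :
    formW n x (omegaW n t) = 0 := by
  unfold formW
  refine Finset.sum_eq_zero fun i _ => Finset.sum_eq_zero fun k _ => ?_
  have hk := k.isLt
  rw [omegaW]
  rw [if_neg (by omega)]
  norm_num

lemma alpha_expand (n : ℕ) (j : ℕ) (hj : 1 ≤ j) :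
    alphaW n j = omegaW n j + omegaW n j - omegaW n (j-1) - omegaW n (j+1) := by
  funext i
  have := alpha_eq n j hj i
  simp only [Pi.sub_apply, Pi.add_apply]
  omega

lemma formW_alpha_expand (n : ℕ) (x : Wt n) (j : ℕ) (hj : 1 ≤ j) :
    formW n x (alphaW n j) = 2 * formW n x (omegaW n j)
      - formW n x (omegaW n (j-1)) - formW n x (omegaW n (j+1)) := by
  rw [alpha_expand n j hj, formW_sub_right, formW_sub_right, formW_add_right]
  ring
lemma one_sub_X_pow_ne (m : ℕ) (hm : 1 ≤ m) : (1 - RatFunc.X ^ m : RatFunc ℚ) ≠ 0 := by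
  have h : (1 - Polynomial.X ^ m : Polynomial ℚ) ≠ 0 := by
    intro h
    have := congrArg (fun p => Polynomial.coeff p m) h
    simp only [Polynomial.coeff_sub, Polynomial.coeff_one, Polynomial.coeff_X_pow, Polynomial.coeff_zero] at this
    rw [if_pos trivial] at this
    rw [if_neg (by omega : ¬ m = 0)] at this; norm_num at this
  have := RatFunc.algebraMap_ne_zero h
  rwa [map_sub, map_one, map_pow, RatFunc.algebraMap_X] at this

lemma one_sub_X_ne : (1 - RatFunc.X : RatFunc ℚ) ≠ 0 := by
  have := one_sub_X_pow_ne 1 le_rfl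
  simpa using this

lemma qint_ne_zero (k : ℤ) (hk : 1 ≤ k) : qint k ≠ 0 := by
  rw [qint]
  have h1 : (RatFunc.X : RatFunc ℚ) ^ k = (RatFunc.X : RatFunc ℚ) ^ k.toNat := by
    rw [← zpow_natCast]
    congr 1
    omega
  rw [h1]
  exact div_ne_zero (one_sub_X_pow_ne k.toNat (by omega)) one_sub_X_ne

lemma qint_split (m r : ℤ) : qint m = qint (m - r) + RatFunc.X ^ (m - r) * qint r := by
  have hX : (RatFunc.X : RatFunc ℚ) ≠ 0 := RatFunc.X_ne_zero
  have hmr : m - r + r = m := by ring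
  rw [qint, qint, qint, ← mul_div_assoc, ← add_div, mul_sub, mul_one,
    ← zpow_add₀ hX, hmr]
  ring_nf

noncomputable def qbNum (m : ℤ) (r : ℕ) : RatFunc ℚ := ∏ k ∈ Finset.range r, qint (m - (k:ℤ))
noncomputable def qbDen (r : ℕ) : RatFunc ℚ := ∏ k ∈ Finset.range r, qint ((k:ℤ) + 1)

lemma qbinom_eq (m r : ℤ) (h0 : 0 ≤ r) (h1 : r ≤ m) :
    qbinom m r = qbNum m r.toNat / qbDen r.toNat := by
  rw [qbinom, if_pos ⟨h0, h1⟩, Finset.prod_div_distrib, qbNum, qbDen]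

lemma qbDen_ne (r : ℕ) : qbDen r ≠ 0 :=
  Finset.prod_ne_zero_iff.mpr fun k _ => qint_ne_zero _ (by omega)

lemma qbNum_ne (m : ℤ) (r : ℕ) (h : (r:ℤ) ≤ m) : qbNum m r ≠ 0 :=
  Finset.prod_ne_zero_iff.mpr fun k hk => qint_ne_zero _ (by
    have := Finset.mem_range.mp hk; omega)

lemma qbNum_succ (m : ℤ) (r : ℕ) : qbNum m (r+1) = qbNum m r * qint (m - r) :=
  Finset.prod_range_succ _ r

lemma qbNum_succ' (m : ℤ) (r : ℕ) : qbNum m (r+1) = qint m * qbNum (m-1) r := by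
  rw [qbNum, Finset.prod_range_succ']
  rw [mul_comm]
  congr 1
  · norm_num
  · refine Finset.prod_congr rfl fun k _ => ?_
    congr 1
    push_cast
    ring

lemma qbDen_succ (r : ℕ) : qbDen (r+1) = qbDen r * qint ((r:ℤ)+1) :=
  Finset.prod_range_succ _ r

lemma qbinom_self (m : ℤ) (h : 0 ≤ m) : qbinom m m = 1 := by
  rw [qbinom_eq m m h le_rfl]
  have : qbNum m m.toNat = qbDen m.toNat := by
    rw [qbNum, qbDen, ← Finset.prod_range_reflect]
    refine Finset.prod_congr rfl fun k hk => ?_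
    have hkm := Finset.mem_range.mp hk
    congr 1
    omega
  rw [this, div_self (qbDen_ne _)]

lemma qbinom_R1 (m r : ℤ) (h0 : 0 ≤ r) (h1 : r ≤ m - 1) :
    qbinom m r * qint (m - r) = qbinom (m-1) r * qint m := by
  rw [qbinom_eq m r h0 (by omega), qbinom_eq (m-1) r h0 (by omega)]
  rw [div_mul_eq_mul_div, div_mul_eq_mul_div]
  congr 1
  have h2 : qbNum m r.toNat * qint (m - r) = qbNum m (r.toNat + 1) := by
    rw [qbNum_succ]
    congr 2
    omega
  rw [h2, qbNum_succ']
  ring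

lemma qbinom_R2 (m r : ℤ) (h0 : 1 ≤ r) (h1 : r ≤ m) :
    qbinom m r * qint r = qbinom (m-1) (r-1) * qint m := by
  rw [qbinom_eq m r (by omega) h1, qbinom_eq (m-1) (r-1) (by omega) (by omega)]
  have ht : r.toNat = (r-1).toNat + 1 := by omega
  rw [ht, qbNum_succ', qbDen_succ]
  have hq : qint (((r-1).toNat : ℤ) + 1) = qint r := by congr 1; omega
  rw [hq]
  rw [div_mul_eq_mul_div, div_mul_eq_mul_div]
  rw [div_eq_div_iff (by exact mul_ne_zero (qbDen_ne _) (qint_ne_zero r (by omega))) (qbDen_ne _)]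
  ring

lemma qbinom_pascal (a B : ℤ) (hB : 1 ≤ B) :
    qbinom (a + B) a = qbinom (a + B - 1) a + RatFunc.X ^ B * qbinom (a + B - 1) (a - 1) := by
  rcases lt_trichotomy a 0 with ha | ha | ha
  · rw [qbinom, if_neg (by omega), qbinom, if_neg (by omega), qbinom, if_neg (by omega)]
    ring
  · subst ha
    have e1 : qbinom (0 + B) 0 = 1 := by
      rw [qbinom, if_pos ⟨le_rfl, by omega⟩]
      simp
    have e2 : qbinom (0 + B - 1) 0 = 1 := by
      rw [qbinom, if_pos ⟨le_rfl, by omega⟩]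
      simp
    have e3 : qbinom (0 + B - 1) (0 - 1) = 0 := by
      rw [qbinom, if_neg (by omega)]
    rw [e1, e2, e3]
    ring
  · have hm : 1 ≤ a + B := by omega
    have hqm : qint (a + B) ≠ 0 := qint_ne_zero _ hm
    have key : qbinom (a + B) a * qint (a + B) =
        (qbinom (a + B - 1) a + RatFunc.X ^ B * qbinom (a + B - 1) (a - 1)) * qint (a + B) := by
      have hBe : a + B - a = B := by ring
      have hsplit := qint_split (a + B) a
      rw [hBe] at hsplit
      have hR1 : qbinom (a + B) a * qint B = qbinom (a + B - 1) a * qint (a + B) := by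
        have := qbinom_R1 (a+B) a (by omega) (by omega)
        rwa [hBe] at this
      have hR2 : qbinom (a + B) a * qint a = qbinom (a + B - 1) (a - 1) * qint (a + B) :=
        qbinom_R2 (a+B) a (by omega) (by omega)
      calc qbinom (a + B) a * qint (a + B)
          = qbinom (a + B) a * qint B + RatFunc.X ^ B * (qbinom (a + B) a * qint a) := by
            rw [hsplit]; ring
        _ = _ := by rw [hR1, hR2]; ring
    exact mul_right_cancel₀ hqm key

lemma qpow_intCast (z : ℤ) : qpow (z : ℚ) = RatFunc.X ^ z := by
  rw [qpow, if_pos (Rat.den_intCast z), Rat.num_intCast]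

lemma qpow_nonint (r : ℚ) (h : ¬ ∃ z : ℤ, r = (z : ℚ)) : qpow r = 0 := by
  rw [qpow, if_neg]
  intro hden
  exact h ⟨r.num, by exact_mod_cast ((Rat.den_eq_one_iff r).mp hden).symm⟩

lemma qbinomQ_intCast (x y : ℤ) : qbinomQ (x : ℚ) (y : ℚ) = qbinom x y := by
  rw [qbinomQ, if_pos ⟨Rat.den_intCast x, Rat.den_intCast y⟩, Rat.num_intCast, Rat.num_intCast]

lemma qbinomQ_nonint_snd (m r : ℚ) (h : ¬ ∃ z : ℤ, r = (z : ℚ)) : qbinomQ m r = 0 := by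
  rw [qbinomQ, if_neg]
  rintro ⟨-, h2⟩
  exact h ⟨r.num, by exact_mod_cast ((Rat.den_eq_one_iff r).mp h2).symm⟩

lemma qbinomQ_neg_snd (m r : ℚ) (h : r < 0) : qbinomQ m r = 0 := by
  rw [qbinomQ]
  split_ifs with h1
  · rw [qbinom, if_neg]
    rintro ⟨h0, -⟩
    exact absurd (Rat.num_nonneg.mp h0) (not_le.mpr h)
  · rfl

lemma qbinom_neg (m r : ℤ) (h : r < 0) : qbinom m r = 0 := by
  rw [qbinom, if_neg]; rintro ⟨h0, -⟩; omega

lemma omegaW_apply_eq (n t : ℕ) (i : Fin n) (h : (i : ℕ) + 1 = t) : omegaW n t i = 1 := if_pos h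

lemma omegaW_apply_ne (n t : ℕ) (i : Fin n) (h : (i : ℕ) + 1 ≠ t) : omegaW n t i = 0 := if_neg h

lemma combine1 (e a b v : ℤ) (G Q0 Q1 Q2 : RatFunc ℚ)
    (hq : Q0 = Q1 + RatFunc.X ^ b * Q2) :
    RatFunc.X ^ e * (Q0 * G) =
      RatFunc.X ^ a * (RatFunc.X ^ (e - a) * (Q1 * G)) +
      RatFunc.X ^ (v - 1) * (RatFunc.X ^ (e + b - v + 1) * (Q2 * G)) := by
  have hX : (RatFunc.X : RatFunc ℚ) ≠ 0 := RatFunc.X_ne_zero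
  have h1 : (RatFunc.X : RatFunc ℚ) ^ a * RatFunc.X ^ (e - a) = RatFunc.X ^ e := by
    rw [← zpow_add₀ hX]; congr 1; ring
  have h2 : (RatFunc.X : RatFunc ℚ) ^ (v-1) * RatFunc.X ^ (e + b - v + 1)
      = RatFunc.X ^ e * RatFunc.X ^ b := by
    rw [← zpow_add₀ hX, ← zpow_add₀ hX]; congr 1; ring
  rw [← mul_assoc ((RatFunc.X:RatFunc ℚ) ^ a), h1, ← mul_assoc ((RatFunc.X:RatFunc ℚ) ^ (v-1)), h2, hq]
  ring

lemma combine2 (e a b v : ℤ) (G Q0 Q2 : RatFunc ℚ) (hb : b = 0) (hq : Q0 = Q2) :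
    RatFunc.X ^ e * (Q0 * G) =
      RatFunc.X ^ a * 0 +
      RatFunc.X ^ (v - 1) * (RatFunc.X ^ (e + b - v + 1) * (Q2 * G)) := by
  have hX : (RatFunc.X : RatFunc ℚ) ≠ 0 := RatFunc.X_ne_zero
  subst hb
  have h2 : (RatFunc.X : RatFunc ℚ) ^ (v-1) * RatFunc.X ^ (e + 0 - v + 1) = RatFunc.X ^ e := by
    rw [← zpow_add₀ hX]; congr 1; ring
  rw [← mul_assoc ((RatFunc.X:RatFunc ℚ) ^ (v-1)), h2, hq]
  ring

set_option maxHeartbeats 1000000 in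
/-- recursion for p_ν^μ when ν(h_j) ≥ 2. -/
theorem pPoly_recursion (n : ℕ) (nu m m0 m1 : Wt n) (j : ℕ)
    (hnu : IsDom n nu) (hm0 : IsDom n m0) (hm1 : IsDomOne n m1)
    (hdec : m = 2 • m0 + m1) (hj1 : 1 ≤ j) (hjn : j ≤ n)
    (hge : 2 ≤ coeffW n nu j) :
    pPoly n nu m m0 m1 =
      qpow (formW n (omegaW n j) (nu - m)) *
        pPoly n (nu - 2 • omegaW n j) (m - 2 • omegaW n j) (m0 - omegaW n j) m1 +
      qpow (formW n nu (alphaW n j) - 1) * pPoly n (nu - alphaW n j) m m0 m1 := by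
  have hn1 : 1 ≤ n := hj1.trans hjn
  have hjS : j ∈ Finset.Icc 1 n := Finset.mem_Icc.mpr ⟨hj1, hjn⟩
  have jmpf : j - 1 < n := by omega
  have hjm : ((⟨j-1, jmpf⟩ : Fin n) : ℕ) + 1 = j := by show j - 1 + 1 = j; omega
  have hnuj : (2:ℤ) ≤ nu ⟨j-1, jmpf⟩ := by
    rwa [coeffW_eq n nu j ⟨j-1, jmpf⟩ hjm] at hge
  have hm0j : (0:ℤ) ≤ m0 ⟨j-1, jmpf⟩ := hm0 _
  have hm1j := hm1 (⟨j-1, jmpf⟩ : Fin n)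
  have hmj : m ⟨j-1, jmpf⟩ = 2 * m0 ⟨j-1, jmpf⟩ + m1 ⟨j-1, jmpf⟩ := by
    have := congrFun hdec ⟨j-1, jmpf⟩
    simp only [Pi.add_apply, Pi.smul_apply, two_smul] at this
    omega
  have h2w : (2 : ℕ) • omegaW n j = omegaW n j + omegaW n j := two_smul ℕ _
  have hωjm : omegaW n j ⟨j-1, jmpf⟩ = 1 := omegaW_apply_eq n j _ hjm
  have hd2 : IsDom n (nu - alphaW n j) := by
    intro i
    simp only [Pi.sub_apply, alphaW]
    have h0 := hnu i
    split_ifs with h1 h2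
    · have hij : i = ⟨j-1, jmpf⟩ := Fin.ext (by omega)
      rw [hij]; omega
    · omega
    · omega
  have hd1 : IsDom n (nu - (omegaW n j + omegaW n j)) := by
    intro i
    simp only [Pi.sub_apply, Pi.add_apply, omegaW]
    have h0 := hnu i
    split_ifs with h1
    · have hij : i = ⟨j-1, jmpf⟩ := Fin.ext (by omega)
      rw [hij]; omega
    · omega
  have hdec1 : m - (omegaW n j + omegaW n j) = 2 • (m0 - omegaW n j) + m1 := by
    funext i
    have := congrFun hdec i
    simp only [Pi.add_apply, Pi.sub_apply, Pi.smul_apply, two_smul] at this ⊢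
    omega
  have hgL : IsDom n nu ∧ IsDom n m0 ∧ IsDomOne n m1 ∧ m = 2 • m0 + m1 := ⟨hnu, hm0, hm1, hdec⟩
  have hg2 : IsDom n (nu - alphaW n j) ∧ IsDom n m0 ∧ IsDomOne n m1 ∧ m = 2 • m0 + m1 :=
    ⟨hd2, hm0, hm1, hdec⟩
  have hE1 : formW n (nu + m1 - (omegaW n j + omegaW n j)) (nu - m) / 2
      = formW n (nu + m1) (nu - m) / 2 - formW n (nu - m) (omegaW n j) := by
    rw [formW_sub_left, formW_add_left n (omegaW n j) (omegaW n j) (nu - m),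
      formW_comm n (omegaW n j) (nu - m)]
    ring
  have hαα : formW n (alphaW n j) (alphaW n j) = 2 := by
    rw [formW_alpha n (alphaW n j) j hj1 hjn ⟨j-1, jmpf⟩ hjm]
    have : alphaW n j ⟨j-1, jmpf⟩ = 2 := by
      show (if (j-1) + 1 = j then (2:ℤ) else _) = 2
      rw [if_pos (by omega)]
    rw [this]; norm_num
  have hE2 : formW n (nu + m1 - alphaW n j) (nu - m - alphaW n j) / 2
      = formW n (nu + m1) (nu - m) / 2 + ((m0 ⟨j-1, jmpf⟩ : ℤ) : ℚ)
        - ((nu ⟨j-1, jmpf⟩ : ℤ) : ℚ) + 1 := by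
    rw [formW_sub_left, formW_sub_right n (nu + m1) (nu - m) (alphaW n j),
      formW_sub_right n (alphaW n j) (nu - m) (alphaW n j),
      formW_alpha n (nu + m1) j hj1 hjn ⟨j-1, jmpf⟩ hjm,
      formW_comm n (alphaW n j) (nu - m),
      formW_alpha n (nu - m) j hj1 hjn ⟨j-1, jmpf⟩ hjm, hαα]
    simp only [Pi.add_apply, Pi.sub_apply]
    have hmjQ : ((m ⟨j-1, jmpf⟩ : ℤ) : ℚ)
        = 2 * ((m0 ⟨j-1, jmpf⟩ : ℤ) : ℚ) + ((m1 ⟨j-1, jmpf⟩ : ℤ) : ℚ) := by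
      exact_mod_cast congrArg (fun z : ℤ => (z : ℚ)) hmj
    push_cast
    push_cast at hmjQ
    linarith
  have hval0 : formW n m0 (alphaW n j) = ((m0 ⟨j-1, jmpf⟩ : ℤ) : ℚ) :=
    formW_alpha n m0 j hj1 hjn ⟨j-1, jmpf⟩ hjm
  have hval1 : formW n (m0 - omegaW n j) (alphaW n j) = ((m0 ⟨j-1, jmpf⟩ - 1 : ℤ) : ℚ) := by
    rw [formW_alpha n (m0 - omegaW n j) j hj1 hjn ⟨j-1, jmpf⟩ hjm, Pi.sub_apply, hωjm]
  have hA2 : formW n (nu - m - alphaW n j) (omegaW n j) = formW n (nu - m) (omegaW n j) - 1 := by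
    rw [formW_sub_left, formW_comm n (alphaW n j) (omegaW n j),
      formW_alpha n (omegaW n j) j hj1 hjn ⟨j-1, jmpf⟩ hjm, hωjm]
    norm_num
  -- unfold and normalize arguments
  simp only [pPoly]
  rw [h2w]
  rw [sub_sub_sub_cancel_right nu m (omegaW n j + omegaW n j),
    sub_add_eq_add_sub nu (omegaW n j + omegaW n j) m1,
    sub_add_eq_add_sub nu (alphaW n j) m1,
    sub_right_comm nu (alphaW n j) m]
  rw [if_pos hgL, if_pos hg2]
  rw [formW_comm n (omegaW n j) (nu - m)]
  rw [formW_alpha n nu j hj1 hjn ⟨j-1, jmpf⟩ hjm]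
  rw [hE1, hE2]
  by_cases hA : ∃ a : ℤ, formW n (nu - m) (omegaW n j) = (a : ℚ)
  swap
  · -- second argument of the j-th binomial is not an integer: all terms vanish
    have hz0 : qbinomQ (formW n (nu - m) (omegaW n j) + formW n m0 (alphaW n j))
        (formW n (nu - m) (omegaW n j)) = 0 := qbinomQ_nonint_snd _ _ hA
    have hz1 : qbinomQ (formW n (nu - m) (omegaW n j) + formW n (m0 - omegaW n j) (alphaW n j))
        (formW n (nu - m) (omegaW n j)) = 0 := qbinomQ_nonint_snd _ _ hA
    have hz2 : qbinomQ (formW n (nu - m - alphaW n j) (omegaW n j) + formW n m0 (alphaW n j))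
        (formW n (nu - m - alphaW n j) (omegaW n j)) = 0 := by
      apply qbinomQ_nonint_snd
      rw [hA2]
      rintro ⟨z, hz⟩
      exact hA ⟨z + 1, by push_cast; linarith⟩
    have hp0 : (∏ k ∈ Finset.Icc 1 n, qbinomQ (formW n (nu - m) (omegaW n k)
        + formW n m0 (alphaW n k)) (formW n (nu - m) (omegaW n k))) = 0 :=
      Finset.prod_eq_zero hjS hz0
    have hp1 : (∏ k ∈ Finset.Icc 1 n, qbinomQ (formW n (nu - m) (omegaW n k)
        + formW n (m0 - omegaW n j) (alphaW n k)) (formW n (nu - m) (omegaW n k))) = 0 :=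
      Finset.prod_eq_zero hjS hz1
    have hp2 : (∏ k ∈ Finset.Icc 1 n, qbinomQ (formW n (nu - m - alphaW n j) (omegaW n k)
        + formW n m0 (alphaW n k)) (formW n (nu - m - alphaW n j) (omegaW n k))) = 0 :=
      Finset.prod_eq_zero hjS hz2
    rw [hp0, hp1, hp2]
    simp only [mul_zero, ite_self, add_zero, zero_add]
  obtain ⟨a, hA⟩ := hA
  by_cases hE : ∃ e : ℤ, formW n (nu + m1) (nu - m) / 2 = (e : ℚ)
  swap
  · -- the leading exponent is not an integer: all terms vanish
    have hz0 : qpow (formW n (nu + m1) (nu - m) / 2) = 0 := qpow_nonint _ hE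
    have hz1 : qpow (formW n (nu + m1) (nu - m) / 2 - formW n (nu - m) (omegaW n j)) = 0 := by
      apply qpow_nonint
      rintro ⟨z, hz⟩
      rw [hA] at hz
      exact hE ⟨z + a, by push_cast; linarith⟩
    have hz2 : qpow (formW n (nu + m1) (nu - m) / 2 + ((m0 ⟨j-1, jmpf⟩ : ℤ) : ℚ)
        - ((nu ⟨j-1, jmpf⟩ : ℤ) : ℚ) + 1) = 0 := by
      apply qpow_nonint
      rintro ⟨z, hz⟩
      exact hE ⟨z - m0 ⟨j-1, jmpf⟩ + nu ⟨j-1, jmpf⟩ - 1, by push_cast; linarith⟩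
    rw [hz0, hz1, hz2]
    simp only [zero_mul, mul_zero, ite_self, add_zero, zero_add]
  obtain ⟨e, hE⟩ := hE
  by_cases hdeg : a = 0 ∧ m0 ⟨j-1, jmpf⟩ = 0
  · -- degenerate case: a neighboring binomial factor vanishes
    obtain ⟨k0, hk0S, hk0j, hneg⟩ : ∃ k0, k0 ∈ Finset.Icc 1 n ∧ k0 ≠ j ∧
        formW n (nu - m) (omegaW n k0) < 0 := by
      have hrel := formW_alpha_expand n (nu - m) j hj1
      rw [formW_alpha n (nu - m) j hj1 hjn ⟨j-1, jmpf⟩ hjm, hA, hdeg.1] at hrel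
      rw [Pi.sub_apply] at hrel
      push_cast at hrel
      have hnumZ : (1:ℤ) ≤ nu ⟨j-1, jmpf⟩ - m ⟨j-1, jmpf⟩ := by
        have := hdeg.2
        omega
      have hnum : (1:ℚ) ≤ ((nu ⟨j-1, jmpf⟩ : ℤ) : ℚ) - ((m ⟨j-1, jmpf⟩ : ℤ) : ℚ) := by
        exact_mod_cast hnumZ
      have hor : formW n (nu - m) (omegaW n (j-1)) < 0 ∨
          formW n (nu - m) (omegaW n (j+1)) < 0 := by
        by_contra hc
        push_neg at hc
        linarith [hc.1, hc.2]
      rcases hor with h | h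
      · have hj2 : 2 ≤ j := by
          by_contra hc
          have hj1' : j = 1 := by omega
          rw [hj1'] at h
          norm_num at h
          rw [formW_omega_oob n (nu - m) 0 (Or.inl rfl)] at h
          exact absurd h (lt_irrefl 0)
        exact ⟨j-1, Finset.mem_Icc.mpr ⟨by omega, by omega⟩, by omega, h⟩
      · have hjn' : j + 1 ≤ n := by
          by_contra hc
          have hjeq : j = n := by omega
          rw [hjeq] at h
          rw [formW_omega_oob n (nu - m) (n+1) (Or.inr rfl)] at h
          exact absurd h (lt_irrefl 0)
        exact ⟨j+1, Finset.mem_Icc.mpr ⟨by omega, hjn'⟩, by omega, h⟩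
    have hz0 : qbinomQ (formW n (nu - m) (omegaW n k0) + formW n m0 (alphaW n k0))
        (formW n (nu - m) (omegaW n k0)) = 0 := qbinomQ_neg_snd _ _ hneg
    have hp0 : (∏ k ∈ Finset.Icc 1 n, qbinomQ (formW n (nu - m) (omegaW n k)
        + formW n m0 (alphaW n k)) (formW n (nu - m) (omegaW n k))) = 0 :=
      Finset.prod_eq_zero hk0S hz0
    have hk01 : 1 ≤ k0 := (Finset.mem_Icc.mp hk0S).1
    have hk0n : k0 ≤ n := (Finset.mem_Icc.mp hk0S).2
    have hz2 : qbinomQ (formW n (nu - m - alphaW n j) (omegaW n k0) + formW n m0 (alphaW n k0))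
        (formW n (nu - m - alphaW n j) (omegaW n k0)) = 0 := by
      apply qbinomQ_neg_snd
      rw [formW_sub_left, formW_comm n (alphaW n j) (omegaW n k0),
        formW_alpha n (omegaW n k0) j hj1 hjn ⟨j-1, jmpf⟩ hjm,
        omegaW_apply_ne n k0 ⟨j-1, jmpf⟩ (by omega)]
      norm_num
      exact hneg
    have hp2 : (∏ k ∈ Finset.Icc 1 n, qbinomQ (formW n (nu - m - alphaW n j) (omegaW n k)
        + formW n m0 (alphaW n k)) (formW n (nu - m - alphaW n j) (omegaW n k))) = 0 :=
      Finset.prod_eq_zero hk0S hz2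
    have hng1 : ¬(IsDom n (nu - (omegaW n j + omegaW n j)) ∧ IsDom n (m0 - omegaW n j) ∧
        IsDomOne n m1 ∧ m - (omegaW n j + omegaW n j) = 2 • (m0 - omegaW n j) + m1) := by
      rintro ⟨-, hdm, -, -⟩
      have := hdm ⟨j-1, jmpf⟩
      rw [Pi.sub_apply, hωjm, hdeg.2] at this
      omega
    rw [hp0, hp2, if_neg hng1]
    simp only [mul_zero, add_zero, zero_add]
  · -- main case
    rw [hE, hA]
    have hsplit0 : (∏ k ∈ Finset.Icc 1 n, qbinomQ (formW n (nu - m) (omegaW n k)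
        + formW n m0 (alphaW n k)) (formW n (nu - m) (omegaW n k)))
        = qbinomQ (formW n (nu - m) (omegaW n j) + formW n m0 (alphaW n j))
            (formW n (nu - m) (omegaW n j)) *
          ∏ k ∈ (Finset.Icc 1 n).erase j, qbinomQ (formW n (nu - m) (omegaW n k)
            + formW n m0 (alphaW n k)) (formW n (nu - m) (omegaW n k)) :=
      (Finset.mul_prod_erase _ _ hjS).symm
    have hsplit1 : (∏ k ∈ Finset.Icc 1 n, qbinomQ (formW n (nu - m) (omegaW n k)
        + formW n (m0 - omegaW n j) (alphaW n k)) (formW n (nu - m) (omegaW n k)))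
        = qbinomQ (formW n (nu - m) (omegaW n j) + formW n (m0 - omegaW n j) (alphaW n j))
            (formW n (nu - m) (omegaW n j)) *
          ∏ k ∈ (Finset.Icc 1 n).erase j, qbinomQ (formW n (nu - m) (omegaW n k)
            + formW n m0 (alphaW n k)) (formW n (nu - m) (omegaW n k)) := by
      rw [← Finset.mul_prod_erase _ _ hjS]
      congr 1
      refine Finset.prod_congr rfl fun k hk => ?_
      obtain ⟨hk1, hkn'⟩ := Finset.mem_Icc.mp (Finset.mem_of_mem_erase hk)
      have hkj := Finset.ne_of_mem_erase hk
      have hv : formW n (m0 - omegaW n j) (alphaW n k) = formW n m0 (alphaW n k) := by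
        rw [formW_sub_left,
          formW_alpha n (omegaW n j) k hk1 hkn' ⟨k-1, by omega⟩ (show k-1+1 = k by omega),
          omegaW_apply_ne n j ⟨k-1, by omega⟩ (show ¬(k-1+1 = j) by omega)]
        norm_num
      rw [hv]
    have hsplit2 : (∏ k ∈ Finset.Icc 1 n, qbinomQ (formW n (nu - m - alphaW n j) (omegaW n k)
        + formW n m0 (alphaW n k)) (formW n (nu - m - alphaW n j) (omegaW n k)))
        = qbinomQ (formW n (nu - m - alphaW n j) (omegaW n j) + formW n m0 (alphaW n j))
            (formW n (nu - m - alphaW n j) (omegaW n j)) *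
          ∏ k ∈ (Finset.Icc 1 n).erase j, qbinomQ (formW n (nu - m) (omegaW n k)
            + formW n m0 (alphaW n k)) (formW n (nu - m) (omegaW n k)) := by
      rw [← Finset.mul_prod_erase _ _ hjS]
      congr 1
      refine Finset.prod_congr rfl fun k hk => ?_
      have hkj := Finset.ne_of_mem_erase hk
      have hv : formW n (nu - m - alphaW n j) (omegaW n k) = formW n (nu - m) (omegaW n k) := by
        rw [formW_sub_left, formW_comm n (alphaW n j) (omegaW n k),
          formW_alpha n (omegaW n k) j hj1 hjn ⟨j-1, jmpf⟩ hjm,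
          omegaW_apply_ne n k ⟨j-1, jmpf⟩ (by omega)]
        norm_num
      rw [hv]
    rw [hsplit0, hsplit1, hsplit2, hval0, hval1, hA2, hA]
    have hc1 : (a:ℚ) + ((m0 ⟨j-1, jmpf⟩ : ℤ) : ℚ) = ((a + m0 ⟨j-1, jmpf⟩ : ℤ) : ℚ) := by
      push_cast; ring
    have hc2 : (a:ℚ) + ((m0 ⟨j-1, jmpf⟩ - 1 : ℤ) : ℚ) = ((a + m0 ⟨j-1, jmpf⟩ - 1 : ℤ) : ℚ) := by
      push_cast; ring
    have hc3 : (a:ℚ) - 1 + ((m0 ⟨j-1, jmpf⟩ : ℤ) : ℚ) = ((a + m0 ⟨j-1, jmpf⟩ - 1 : ℤ) : ℚ) := by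
      push_cast; ring
    have hc4 : (a:ℚ) - 1 = ((a - 1 : ℤ) : ℚ) := by push_cast; ring
    have hc5 : (e:ℚ) - (a:ℚ) = ((e - a : ℤ) : ℚ) := by push_cast; ring
    have hc6 : ((nu ⟨j-1, jmpf⟩ : ℤ) : ℚ) - 1 = ((nu ⟨j-1, jmpf⟩ - 1 : ℤ) : ℚ) := by
      push_cast; ring
    have hc7 : (e:ℚ) + ((m0 ⟨j-1, jmpf⟩ : ℤ) : ℚ) - ((nu ⟨j-1, jmpf⟩ : ℤ) : ℚ) + 1
        = ((e + m0 ⟨j-1, jmpf⟩ - nu ⟨j-1, jmpf⟩ + 1 : ℤ) : ℚ) := by push_cast; ring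
    rw [hc1, hc2, hc3, hc4, hc5, hc6, hc7]
    simp only [qbinomQ_intCast, qpow_intCast]
    by_cases hb : 1 ≤ m0 ⟨j-1, jmpf⟩
    · have hdm : IsDom n (m0 - omegaW n j) := by
        intro i
        simp only [Pi.sub_apply, omegaW]
        have h0 := hm0 i
        split_ifs with h1
        · have hij : i = ⟨j-1, jmpf⟩ := Fin.ext (by omega)
          rw [hij]; omega
        · omega
      rw [if_pos ⟨hd1, hdm, hm1, hdec1⟩]
      exact combine1 e a (m0 ⟨j-1, jmpf⟩) (nu ⟨j-1, jmpf⟩) _ _ _ _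
        (qbinom_pascal a (m0 ⟨j-1, jmpf⟩) hb)
    · have hb0 : m0 ⟨j-1, jmpf⟩ = 0 := by omega
      have ha0 : a ≠ 0 := fun h => hdeg ⟨h, hb0⟩
      have hng1 : ¬(IsDom n (nu - (omegaW n j + omegaW n j)) ∧ IsDom n (m0 - omegaW n j) ∧
          IsDomOne n m1 ∧ m - (omegaW n j + omegaW n j) = 2 • (m0 - omegaW n j) + m1) := by
        rintro ⟨-, hdm, -, -⟩
        have := hdm ⟨j-1, jmpf⟩
        rw [Pi.sub_apply, hωjm, hb0] at this
        omega
      rw [if_neg hng1]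
      refine combine2 e a (m0 ⟨j-1, jmpf⟩) (nu ⟨j-1, jmpf⟩) _ _ _ hb0 ?_
      rw [hb0]
      norm_num
      rcases lt_or_ge a 0 with h | h
      · rw [qbinom_neg a a h, qbinom_neg (a-1) (a-1) (by omega)]
      · have h1 : 1 ≤ a := by omega
        rw [qbinom_self a (by omega), qbinom_self (a-1) (by omega)]
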